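/- Let α ∈ (0,1), let γ = 1 − α, and let K = {(a,b,c) ∈ ℝ³ : a ≥ 0, c ≥ 0, a^α · c^γ ≥ b}, where a^α and c^γ are real powers of nonnegative reals. Then: (i) for every (a,b,c) ∈ K, max(a − b, c − b) ≥ 0, i.e. a ≥ b or c ≥ b; (ii) if λ is a real number with 0 ≤ λ such that λ·a + (1−λ)·c ≥ b for all (a,b,c) ∈ K, then λ = α. In particular, when α is irrational, the coefficient λ in the linear inequality implying the max-inequality on K cannot be chosen rational. -/

import Mathlib

/-- Example C.2: let `α ∈ (0,1)`, `γ = 1 − α`, and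
`K = {(a,b,c) : a ≥ 0, c ≥ 0, a^α·c^γ ≥ b}` (real powers).  Then
(i) on `K`, `max(a − b, c − b) ≥ 0`, i.e. `b ≤ a` or `b ≤ c`;
(ii) the only `λ ≥ 0` with `λ·a + (1−λ)·c ≥ b` on all of `K` is `λ = α`.
In particular, for irrational `α` the coefficient `λ` cannot be chosen rational. -/
theorem stmt16 (α γ : ℝ) (hα0 : 0 < α) (hα1 : α < 1) (hγ : γ = 1 - α) :
    (∀ a b c : ℝ, 0 ≤ a → 0 ≤ c → b ≤ a ^ α * c ^ γ → (b ≤ a ∨ b ≤ c)) ∧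
    (∀ lam : ℝ, 0 ≤ lam →
      (∀ a b c : ℝ, 0 ≤ a → 0 ≤ c → b ≤ a ^ α * c ^ γ →
        b ≤ lam * a + (1 - lam) * c) →
      lam = α) := by
  have hγ0 : 0 < γ := by rw [hγ]; linarith
  constructor
  · intro a b c ha hc hb
    set M := max a c with hM
    have hM0 : 0 ≤ M := le_trans ha (le_max_left a c)
    have haM : a ≤ M := le_max_left a c
    have hcM : c ≤ M := le_max_right a c
    have key : b ≤ M := by
      rcases eq_or_lt_of_le hM0 with h0 | h0
      · have ha0 : a = 0 := le_antisymm (h0 ▸ haM) ha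
        have hc0 : c = 0 := le_antisymm (h0 ▸ hcM) hc
        have : b ≤ 0 := by
          simpa [ha0, hc0, Real.zero_rpow (ne_of_gt hα0),
            Real.zero_rpow (ne_of_gt hγ0)] using hb
        linarith [this, hM0]
      · calc b ≤ a ^ α * c ^ γ := hb
          _ ≤ M ^ α * M ^ γ := by
              apply mul_le_mul (Real.rpow_le_rpow ha haM hα0.le)
                (Real.rpow_le_rpow hc hcM hγ0.le)
                (Real.rpow_nonneg hc γ) (Real.rpow_nonneg h0.le α)
          _ = M ^ (α + γ) := (Real.rpow_add h0 α γ).symm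
          _ = M := by rw [hγ]; simp
    rcases max_cases a c with ⟨h1, _⟩ | ⟨h1, _⟩
    · left; rwa [← h1]
    · right; rwa [← h1]
  · intro lam _ hlam
    have hg : ∀ t : ℝ, 0 ≤ t → t ^ α ≤ lam * t + (1 - lam) := by
      intro t ht
      have := hlam t (t ^ α * (1:ℝ) ^ γ) 1 ht zero_le_one le_rfl
      simpa [Real.one_rpow] using this
    set g : ℝ → ℝ := fun t => lam * t + (1 - lam) - t ^ α with hgdef
    have hmin : IsLocalMin g 1 := by
      have h1 : g 1 = 0 := by simp [hgdef]
      rw [IsLocalMin, IsMinFilter]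
      filter_upwards [eventually_gt_nhds (show (0:ℝ) < 1 by norm_num)] with t ht
      rw [h1]
      have := hg t ht.le
      simp only [hgdef]
      linarith
    have hd : HasDerivAt g (lam - α) 1 := by
      have h1 : HasDerivAt (fun t : ℝ => t ^ α) (α * (1:ℝ) ^ (α - 1)) 1 :=
        Real.hasDerivAt_rpow_const (Or.inl one_ne_zero)
      have h2 : HasDerivAt (fun t : ℝ => lam * t + (1 - lam)) lam 1 := by
        simpa using ((hasDerivAt_id (1:ℝ)).const_mul lam).add_const (1 - lam)
      have h3 := h2.sub h1
      rw [Real.one_rpow, mul_one] at h3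
      exact h3
    have := hmin.hasDerivAt_eq_zero hd
    linarith
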